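/- Let G be a finite abelian group generated by h₁, h₂, h₃, and let d : ℂ[G]⁴ → ℂ[G]² be defined by d(a,b,c,d) = (a+b+c+d, a + h₁b + h₂c + h₃d). Then the image of d equals {(x, x + y) : x ∈ ℂ[G], y ∈ L}, where L is the (right) ideal of ℂ[G] generated by h₁-1, h₂-1, h₃-1. -/

import Mathlib

open MonoidAlgebra

noncomputable def pillowD (G : Type*) [CommGroup G] (h1 h2 h3 : G) :
    (MonoidAlgebra ℂ G × MonoidAlgebra ℂ G × MonoidAlgebra ℂ G × MonoidAlgebra ℂ G) →ₗ[ℂ]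
      (MonoidAlgebra ℂ G × MonoidAlgebra ℂ G) where
  toFun x := (x.1 + x.2.1 + x.2.2.1 + x.2.2.2,
    x.1 + MonoidAlgebra.of ℂ G h1 * x.2.1 + MonoidAlgebra.of ℂ G h2 * x.2.2.1
      + MonoidAlgebra.of ℂ G h3 * x.2.2.2)
  map_add' x y := by
    simp only [Prod.fst_add, Prod.snd_add, Prod.mk_add_mk, Prod.mk.injEq, mul_add]
    constructor <;> ring
  map_smul' c x := by
    simp only [Prod.smul_fst, Prod.smul_snd, Prod.smul_mk, RingHom.id_apply, smul_add,
      mul_smul_comm, Prod.mk.injEq]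

theorem pillowD_range (G : Type*) [CommGroup G] [Fintype G] (h1 h2 h3 : G)
    (hgen : Subgroup.closure {h1, h2, h3} = ⊤) :
    (LinearMap.range (pillowD G h1 h2 h3) : Set (MonoidAlgebra ℂ G × MonoidAlgebra ℂ G)) =
      {p | ∃ x : MonoidAlgebra ℂ G, ∃ y ∈ Ideal.span
        {MonoidAlgebra.of ℂ G h1 - 1, MonoidAlgebra.of ℂ G h2 - 1, MonoidAlgebra.of ℂ G h3 - 1},
        p = (x, x + y)} := by
  set g1 := MonoidAlgebra.of ℂ G h1
  set g2 := MonoidAlgebra.of ℂ G h2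
  set g3 := MonoidAlgebra.of ℂ G h3
  ext p
  constructor
  · rintro ⟨⟨a, b, c, d⟩, rfl⟩
    refine ⟨a + b + c + d, b * (g1 - 1) + c * (g2 - 1) + d * (g3 - 1), ?_, ?_⟩
    · refine Ideal.add_mem _ (Ideal.add_mem _ ?_ ?_) ?_ <;>
        exact Ideal.mul_mem_left _ _ (Ideal.subset_span (by simp))
    · simp only [pillowD, LinearMap.coe_mk, AddHom.coe_mk, Prod.mk.injEq]
      constructor
      · trivial
      · ring
  · rintro ⟨x, y, hy, rfl⟩
    rw [show ({g1 - 1, g2 - 1, g3 - 1} : Set (MonoidAlgebra ℂ G)) =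
        insert (g1 - 1) {g2 - 1, g3 - 1} from rfl, Ideal.span_insert,
      Ideal.mem_span_singleton_sup] at hy
    obtain ⟨u, z, hz, rfl⟩ := hy
    rw [Ideal.mem_span_pair] at hz
    obtain ⟨v, w, rfl⟩ := hz
    refine ⟨(x - u - v - w, u, v, w), ?_⟩
    simp only [pillowD, LinearMap.coe_mk, AddHom.coe_mk, Prod.mk.injEq]
    constructor <;> ring
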